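/- Let a,b,c be positive integers and let y : ℕ → ℚ(y₀,y₁,y₂,y₃) satisfy y(k) = (y(k-3)^a · y(k-1)^c + y(k-2)^b)/y(k-4) for k ≥ 4, with y(0),…,y(3) indeterminates. Then every y(k) lies in ℤ[y₀^{±1}, y₁^{±1}, y₂^{±1}, y₃^{±1}]. -/

import Mathlib

open MvPolynomial
set_option maxHeartbeats 1000000
set_option synthInstance.maxHeartbeats 400000

namespace SomosAux

noncomputable section

abbrev R : Type := MvPolynomial (Fin 4) ℤ

def S : Submonoid R := Submonoid.closure (Set.range X)

lemma X_mem_S (i : Fin 4) : (X i : R) ∈ S :=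
  Submonoid.subset_closure ⟨i, rfl⟩

lemma S_le : S ≤ nonZeroDivisors R := by
  rw [S, Submonoid.closure_le]
  rintro r ⟨i, rfl⟩
  exact mem_nonZeroDivisors_of_ne_zero (MvPolynomial.X_ne_zero i)

abbrev A : Type := Localization S

lemma phi_inj : Function.Injective (algebraMap R A) :=
  IsLocalization.injective A S_le

lemma unit_S (s : R) (hs : s ∈ S) : IsUnit (algebraMap R A s) :=
  IsLocalization.map_units A ⟨s, hs⟩

lemma exists_assoc (α : A) : ∃ (r : R) (u : A), IsUnit u ∧ α = algebraMap R A r * u := by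
  obtain ⟨⟨r, s⟩, hrs⟩ := IsLocalization.mk'_surjective S α
  obtain rfl : IsLocalization.mk' A r s = α := hrs
  refine ⟨r, IsLocalization.mk' A 1 s, ?_, IsLocalization.mk'_eq_mul_mk'_one r s⟩
  exact IsUnit.of_mul_eq_one (algebraMap R A s)
    (by rw [IsLocalization.mk'_spec A 1 s, map_one])

lemma dvd_transfer {r m : R} (h : algebraMap R A r ∣ algebraMap R A m) :
    ∃ s ∈ S, r ∣ m * s := by
  obtain ⟨α, hα⟩ := h
  obtain ⟨⟨t, s⟩, hts⟩ := IsLocalization.mk'_surjective S α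
  obtain rfl : IsLocalization.mk' A t s = α := hts
  refine ⟨s, s.2, t, phi_inj ?_⟩
  rw [map_mul, map_mul, hα, mul_assoc, IsLocalization.mk'_spec A t s, ← map_mul]

instance : DecompositionMonoid A := by
  constructor
  intro α β γ hd
  obtain ⟨r, u, hu, rfl⟩ := exists_assoc α
  obtain ⟨r₁, u₁, hu₁, rfl⟩ := exists_assoc β
  obtain ⟨r₂, u₂, hu₂, rfl⟩ := exists_assoc γ
  have h1 : algebraMap R A r ∣ algebraMap R A (r₁ * r₂) := by
    have h2 : algebraMap R A r ∣ algebraMap R A (r₁ * r₂) * (u₁ * u₂) := by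
      refine dvd_trans (dvd_mul_right _ u) (hd.trans (dvd_of_eq ?_))
      rw [map_mul]; ring
    exact ((hu₁.mul hu₂).dvd_mul_right).mp h2
  obtain ⟨s, hs, hdvd⟩ := dvd_transfer h1
  rw [mul_assoc] at hdvd
  obtain ⟨d₁, d₂', hd₁, hd₂', rfl⟩ := exists_dvd_and_dvd_of_dvd_mul hdvd
  obtain ⟨e₁, e₂, he₁, he₂, rfl⟩ := exists_dvd_and_dvd_of_dvd_mul hd₂'
  have he₂u : IsUnit (algebraMap R A e₂) :=
    isUnit_of_dvd_unit (map_dvd _ he₂) (unit_S s hs)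
  refine ⟨algebraMap R A d₁, algebraMap R A e₁ * (algebraMap R A e₂ * u), ?_, ?_, by
    rw [map_mul, map_mul]; ring⟩
  · exact dvd_mul_of_dvd_left (map_dvd _ hd₁) u₁
  · rw [← mul_assoc, hu.mul_right_dvd, he₂u.mul_right_dvd]
    exact dvd_mul_of_dvd_left (map_dvd _ he₁) u₂

/-- evaluation of everything at 1 -/
def evR : R →+* ℚ := (MvPolynomial.eval₂Hom (Int.castRingHom ℚ) (fun _ => 1))

lemma evR_S (s : R) (hs : s ∈ S) : evR s = 1 := by
  induction hs using Submonoid.closure_induction with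
  | mem r hr => obtain ⟨i, rfl⟩ := hr; simp [evR]
  | one => simp
  | mul r t _ _ hr ht => rw [map_mul, hr, ht, mul_one]

def ev : A →+* ℚ :=
  IsLocalization.lift (M := S) (fun s : S => by rw [evR_S s.1 s.2]; exact isUnit_one)

lemma ev_phi (r : R) : ev (algebraMap R A r) = evR r := IsLocalization.lift_eq _ r

instance : Nonempty A := ⟨0⟩

end

end SomosAux

open SomosAux

/-- The generalized Somos-4 recurrence y_k y_{k-4} = y_{k-3}^a y_{k-1}^c + y_{k-2}^b
exhibits the Laurent phenomenon. -/
theorem generalized_somos4_laurent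
    (a b c : ℕ) (ha : 0 < a) (hb : 0 < b) (hc : 0 < c)
    (F : Type*) [Field F] [Algebra (MvPolynomial (Fin 4) ℤ) F]
    [IsFractionRing (MvPolynomial (Fin 4) ℤ) F]
    (x : Fin 4 → F) (hx : ∀ i, x i = algebraMap (MvPolynomial (Fin 4) ℤ) F (X i))
    (y : ℕ → F)
    (hinit : ∀ i : Fin 4, y i = x i)
    (hrec : ∀ k : ℕ, y (k + 4) = (y (k + 1) ^ a * y (k + 3) ^ c + y (k + 2) ^ b) / y k) :
    ∀ k : ℕ, y k ∈ Algebra.adjoin ℤ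
      (Set.range x ∪ Set.range (fun i => (x i)⁻¹)) := by
  classical
  set L := Algebra.adjoin ℤ (Set.range x ∪ Set.range (fun i => (x i)⁻¹)) with hL
  have hRinj : Function.Injective (algebraMap R F) := IsFractionRing.injective R F
  -- elements of S are units in F
  have hSu : ∀ s ∈ S, IsUnit (algebraMap R F s) := by
    intro s hs
    induction hs using Submonoid.closure_induction with
    | mem r hr =>
      obtain ⟨i, rfl⟩ := hr
      exact isUnit_iff_ne_zero.mpr
        ((map_ne_zero_iff _ hRinj).mpr (MvPolynomial.X_ne_zero i))
    | one => simp
    | mul r t _ _ hr ht => rw [map_mul]; exact hr.mul ht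
  have hSne : ∀ s ∈ S, algebraMap R F s ≠ 0 := fun s hs => (hSu s hs).ne_zero
  -- the map from the Laurent ring to F
  set ι : A →+* F := IsLocalization.lift (M := S) (fun s : S => hSu s.1 s.2) with hι
  have hιφ : ∀ r : R, ι (algebraMap R A r) = algebraMap R F r :=
    fun r => IsLocalization.lift_eq _ r
  have hιmk : ∀ (r : R) (s : S), ι (IsLocalization.mk' A r s) * algebraMap R F s
      = algebraMap R F r := by
    intro r s
    rw [← hιφ r, ← hιφ s, ← map_mul, IsLocalization.mk'_spec A r s]
  have hιinj : Function.Injective ι := by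
    have h0 : ∀ α : A, ι α = 0 → α = 0 := by
      intro α hα
      obtain ⟨⟨r, s⟩, hrs⟩ := IsLocalization.mk'_surjective S α
      obtain rfl : IsLocalization.mk' A r s = α := hrs
      have h := hιmk r s
      rw [hα, zero_mul] at h
      have hr : r = 0 := hRinj (by rw [← h, map_zero])
      rw [hr, IsLocalization.mk'_zero]
    intro α β hαβ
    have h := h0 (α - β) (by rw [map_sub, hαβ, sub_self])
    exact sub_eq_zero.mp h
  -- image of ι lands in L
  have hmemL : ∀ α : A, ι α ∈ L := by
    intro α
    obtain ⟨⟨r, s⟩, hrs⟩ := IsLocalization.mk'_surjective S α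
    obtain rfl : IsLocalization.mk' A r s = α := hrs
    have hmkeq := hιmk r s
    have hinvmem : ∀ t ∈ S, (algebraMap R F t)⁻¹ ∈ L := by
      intro t ht
      induction ht using Submonoid.closure_induction with
      | mem p hp =>
        obtain ⟨i, rfl⟩ := hp
        rw [← hx i]
        exact Algebra.subset_adjoin (Set.mem_union_right _ ⟨i, rfl⟩)
      | one => simpa using Subalgebra.one_mem L
      | mul p q _ _ hp hq => rw [map_mul, mul_inv]; exact L.mul_mem hp hq
    have hpolymem : ∀ r : R, algebraMap R F r ∈ L := by
      intro r
      induction r using MvPolynomial.induction_on with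
      | C n =>
        rw [eq_intCast (MvPolynomial.C : ℤ →+* R) n, map_intCast]
        exact Subalgebra.intCast_mem L n
      | add p q hp hq => rw [map_add]; exact L.add_mem hp hq
      | mul_X p i hp =>
        rw [map_mul]
        exact L.mul_mem hp
          (by rw [← hx i]; exact Algebra.subset_adjoin (Set.mem_union_left _ ⟨i, rfl⟩))
    have heq : ι (IsLocalization.mk' A r s) = algebraMap R F r * (algebraMap R F s)⁻¹ := by
      rw [eq_mul_inv_iff_mul_eq₀ (hSne s s.2)]
      exact hmkeq
    rw [heq]
    exact L.mul_mem (hpolymem r) (hinvmem s s.2)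
  -- the lifted sequence
  set z : ℕ → A := fun n => Function.invFun ι (y n) with hzdef
  -- main induction
  have key : ∀ n : ℕ, y n ∈ Set.range ι ∧ 0 < ev (z n) ∧
      ∀ j, j < n → n ≤ j + 3 → IsRelPrime (z j) (z n) := by
    intro n
    induction n using Nat.strong_induction_on with
    | _ n IH =>
    rcases lt_or_ge n 4 with hn | hn
    · -- base case: generators
      have hyi : y n = ι (algebraMap R A (X (⟨n, hn⟩ : Fin 4))) := by
        rw [hιφ, ← hx ⟨n, hn⟩, ← hinit ⟨n, hn⟩]
      have hrange : y n ∈ Set.range ι := ⟨_, hyi.symm⟩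
      have hzn : z n = algebraMap R A (X (⟨n, hn⟩ : Fin 4)) := by
        apply hιinj
        rw [show ι (z n) = y n from Function.invFun_eq hrange, hyi]
      refine ⟨hrange, ?_, ?_⟩
      · rw [hzn, ev_phi, show evR (X (⟨n, hn⟩ : Fin 4)) = 1 from by simp [evR]]
        norm_num
      · intro j hj1 hj2
        have hu : IsUnit (z n) := by rw [hzn]; exact unit_S _ (X_mem_S _)
        exact hu.isRelPrime_right
    · obtain ⟨m, rfl⟩ : ∃ m, n = m + 4 := ⟨n - 4, by omega⟩
      have Qs := fun (j : ℕ) (hj : j ≤ m + 3) => IH j (by omega)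
      have hrng : ∀ j, j ≤ m + 3 → y j ∈ Set.range ι := fun j hj => (Qs j hj).1
      have hz' : ∀ j, j ≤ m + 3 → ι (z j) = y j :=
        fun j hj => Function.invFun_eq (hrng j hj)
      have hev : ∀ j, j ≤ m + 3 → 0 < ev (z j) := fun j hj => (Qs j hj).2.1
      have hzne : ∀ j, j ≤ m + 3 → z j ≠ 0 := by
        intro j hj h0
        have := hev j hj
        rw [h0, map_zero] at this
        exact lt_irrefl _ this
      have hyne : ∀ j, j ≤ m + 3 → y j ≠ 0 := by
        intro j hj h0
        exact hzne j hj (hιinj (by rw [hz' j hj, h0, map_zero]))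
      have hrecA : ∀ j, j + 4 ≤ m + 3 →
          z (j + 4) * z j = z (j + 1) ^ a * z (j + 3) ^ c + z (j + 2) ^ b := by
        intro j hj
        apply hιinj
        rw [map_mul, map_add, map_mul, map_pow, map_pow, map_pow,
          hz' (j+4) (by omega), hz' j (by omega), hz' (j+1) (by omega),
          hz' (j+3) (by omega), hz' (j+2) (by omega), hrec j,
          div_mul_cancel₀ _ (hyne j (by omega))]
      -- key divisibility
      have hdvd : z m ∣ z (m + 1) ^ a * z (m + 3) ^ c + z (m + 2) ^ b := by
        rcases lt_or_ge m 4 with hm | hm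
        · have hu : IsUnit (z m) := by
            have hzm : z m = algebraMap R A (X (⟨m, hm⟩ : Fin 4)) := by
              apply hιinj
              rw [hz' m (by omega), hιφ, ← hx ⟨m, hm⟩, ← hinit ⟨m, hm⟩]
            rw [hzm]; exact unit_S _ (X_mem_S _)
          exact hu.dvd
        · obtain ⟨p, rfl⟩ : ∃ p, m = p + 4 := ⟨m - 4, by omega⟩
          have R1 : z (p+4) * z p = z (p+1) ^ a * z (p+3) ^ c + z (p+2) ^ b :=
            hrecA p (by omega)
          have R2 : z (p+5) * z (p+1) = z (p+2) ^ a * z (p+4) ^ c + z (p+3) ^ b :=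
            hrecA (p+1) (by omega)
          have R3 : z (p+6) * z (p+2) = z (p+3) ^ a * z (p+5) ^ c + z (p+4) ^ b :=
            hrecA (p+2) (by omega)
          have R4 : z (p+7) * z (p+3) = z (p+4) ^ a * z (p+6) ^ c + z (p+5) ^ b :=
            hrecA (p+3) (by omega)
          have cp1 : IsRelPrime (z (p+1)) (z (p+4)) :=
            (Qs (p+4) (by omega)).2.2 (p+1) (by omega) (by omega)
          have cp2 : IsRelPrime (z (p+2)) (z (p+4)) :=
            (Qs (p+4) (by omega)).2.2 (p+2) (by omega) (by omega)
          have cp3 : IsRelPrime (z (p+3)) (z (p+4)) :=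
            (Qs (p+4) (by omega)).2.2 (p+3) (by omega) (by omega)
          have hdd : z (p+4) ∣ (z (p+3)) ^ c * ((z (p+1)) ^ a * ((z (p+2)) ^ b *
              (z (p+5) ^ a * z (p+7) ^ c + z (p+6) ^ b))) := by
            rw [← Ideal.mem_span_singleton, ← Ideal.Quotient.eq_zero_iff_mem]
            set π := Ideal.Quotient.mk (Ideal.span {z (p+4)}) with hπ
            have hP : π (z (p+4)) = 0 :=
              Ideal.Quotient.eq_zero_iff_mem.mpr (Ideal.mem_span_singleton_self _)
            have hz0 : (0 : A ⧸ Ideal.span {z (p+4)}) = @OfNat.ofNat _ 0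
                (@Zero.toOfNat0 _ (MonoidWithZero.toZero : Zero (A ⧸ Ideal.span {z (p+4)}))) := rfl
            rw [hz0] at hP
            have e1 := congrArg π R1
            have e2 := congrArg π R2
            have e3 := congrArg π R3
            have e4 := congrArg π R4
            simp only [map_mul, map_add, map_pow, hP, zero_mul, mul_zero,
              zero_pow ha.ne', zero_pow hb.ne', zero_pow hc.ne', zero_add, add_zero] at e1 e2 e3 e4
            have e4c : (π (z (p+7)) * π (z (p+3))) ^ c = (π (z (p+5)) ^ b) ^ c := by rw [e4]
            have e3b : (π (z (p+6)) * π (z (p+2))) ^ b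
                = (π (z (p+3)) ^ a * π (z (p+5)) ^ c) ^ b := by rw [e3]
            have e2a : (π (z (p+5)) * π (z (p+1))) ^ a = (π (z (p+3)) ^ b) ^ a := by rw [e2]
            simp only [map_mul, map_add, map_pow]
            linear_combination (π (z (p+1)) ^ a * π (z (p+2)) ^ b * π (z (p+5)) ^ a) * e4c
              + (π (z (p+3)) ^ c * π (z (p+1)) ^ a) * e3b
              + (π (z (p+2)) ^ b * π (z (p+5)) ^ (b*c)) * e2a
              - (π (z (p+5)) ^ (b*c) * π (z (p+3)) ^ (a*b)) * e1
          have h2 := (cp3.symm.pow_right).dvd_of_dvd_mul_left hdd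
          have h3 := (cp1.symm.pow_right).dvd_of_dvd_mul_left h2
          exact (cp2.symm.pow_right).dvd_of_dvd_mul_left h3
      obtain ⟨W, hW⟩ := hdvd
      have hyrec : y (m + 4) * y m = y (m+1) ^ a * y (m+3) ^ c + y (m+2) ^ b := by
        rw [hrec m, div_mul_cancel₀ _ (hyne m (by omega))]
      have hιW : ι W = y (m + 4) := by
        have h1 : y m * ι W = y (m+1) ^ a * y (m+3) ^ c + y (m+2) ^ b := by
          rw [← hz' m (by omega), ← map_mul, ← hW, map_add, map_mul, map_pow, map_pow,
            map_pow, hz' (m+1) (by omega), hz' (m+3) (by omega), hz' (m+2) (by omega)]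
        have h2 : y m * ι W = y m * y (m + 4) := by
          rw [h1, ← hyrec]; ring
        exact mul_left_cancel₀ (hyne m (by omega)) h2
      have hrange : y (m + 4) ∈ Set.range ι := ⟨W, hιW⟩
      have hzm4 : z (m + 4) = W := by
        apply hιinj
        rw [show ι (z (m + 4)) = y (m + 4) from Function.invFun_eq hrange, hιW]
      have hNrec : z (m+4) * z m = z (m+1) ^ a * z (m+3) ^ c + z (m+2) ^ b := by
        rw [hzm4, hW]; ring
      refine ⟨hrange, ?_, ?_⟩
      · have hevmul : ev (z (m+4)) * ev (z m)
            = ev (z (m+1)) ^ a * ev (z (m+3)) ^ c + ev (z (m+2)) ^ b := by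
          have h0 := congrArg ev hNrec
          simpa only [map_mul, map_add, map_pow] using h0
        have h1 : 0 < ev (z (m+1)) ^ a * ev (z (m+3)) ^ c + ev (z (m+2)) ^ b :=
          add_pos (mul_pos (pow_pos (hev (m+1) (by omega)) a)
            (pow_pos (hev (m+3) (by omega)) c)) (pow_pos (hev (m+2) (by omega)) b)
        have h2 : ev (z (m+4)) = (ev (z (m+1)) ^ a * ev (z (m+3)) ^ c + ev (z (m+2)) ^ b)
            / ev (z m) := by
          rw [eq_div_iff (hev m (by omega)).ne']
          exact hevmul
        rw [h2]
        exact div_pos h1 (hev m (by omega))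
      · intro j hj1 hj2
        have cp12 : IsRelPrime (z (m+1)) (z (m+2)) :=
          (Qs (m+2) (by omega)).2.2 (m+1) (by omega) (by omega)
        have cp23 : IsRelPrime (z (m+2)) (z (m+3)) :=
          (Qs (m+3) (by omega)).2.2 (m+2) (by omega) (by omega)
        have hj : j = m+1 ∨ j = m+2 ∨ j = m+3 := by omega
        rcases hj with rfl | rfl | rfl
        · intro d hdj hd4
          have hdw : d ∣ z (m+2) ^ b := by
            have h1 : d ∣ z (m+4) * z m := hd4.mul_right _
            have h2 : d ∣ z (m+1) ^ a * z (m+3) ^ c :=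
              dvd_mul_of_dvd_left (dvd_pow hdj ha.ne') _
            have h3 := dvd_sub h1 h2
            rwa [hNrec, add_sub_cancel_left] at h3
          exact (cp12.pow_right) hdj hdw
        · intro d hdj hd4
          have hdw : d ∣ z (m+1) ^ a * z (m+3) ^ c := by
            have h1 : d ∣ z (m+4) * z m := hd4.mul_right _
            have h2 : d ∣ z (m+2) ^ b := dvd_pow hdj hb.ne'
            have h3 := dvd_sub h1 h2
            rwa [hNrec, add_sub_cancel_right] at h3
          exact ((cp12.symm.pow_right).mul_right (cp23.pow_right)) hdj hdw
        · intro d hdj hd4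
          have hdw : d ∣ z (m+2) ^ b := by
            have h1 : d ∣ z (m+4) * z m := hd4.mul_right _
            have h2 : d ∣ z (m+1) ^ a * z (m+3) ^ c :=
              dvd_mul_of_dvd_right (dvd_pow hdj hc.ne') _
            have h3 := dvd_sub h1 h2
            rwa [hNrec, add_sub_cancel_left] at h3
          exact (cp23.pow_left) hdw hdj
  intro k
  have hk : ι (z k) = y k := Function.invFun_eq (key k).1
  rw [← hk]
  exact hmemL _
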